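/- Let f ∈ ℂ[[λ,μ]] be symmetric, i.e. f(λ,μ) = f(μ,λ). Let C ∈ ℂ[[λ,μ]] be the unique formal power series with λμ(e^{λ+μ} − 1)·C(λ,μ) = (λ+μ)(e^{μ} − 1) − μ(e^{λ+μ} − 1), and let g ∈ ℂ[[λ,μ]] be the unique formal power series with (e^{λ} − 1)·g(λ,μ) = λ·f(λ,μ). Write ρ = −λ−μ. Then the following two identities in ℂ[[λ,μ]] are equivalent: (i) g(λ,μ)·(1 − μ·C(λ,μ)) + g(μ,ρ)·(1 + λ·C(λ,μ)) + g(ρ,λ) + C(λ,μ) = 0; (ii) λμ(λ+μ)·( f(λ,μ) + e^{μ}·f(μ,−λ−μ) + e^{−λ}·f(λ,−λ−μ) ) = λ(e^{μ} − 1) + μ(e^{−λ} − 1). -/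

import Mathlib

noncomputable section

open Finset MvPowerSeries

/-- Total degree of a monomial in two variables. -/
def deg (d : Fin 2 →₀ ℕ) : ℕ := d 0 + d 1

/-- Formal substitution `f(p, q)` of two polynomials `p`, `q` with zero constant term
for the variables of a two-variable formal power series `f`: the coefficient of a
monomial `d` in `f(p,q)` is `∑_{i,j} (coeff of λ^i μ^j in f) ⬝ (coeff of d in pⁱ·qʲ)`,
a finite sum since `coeff d (pⁱ·qʲ) = 0` whenever `i + j > deg d`. -/
def sub2 (p q : MvPolynomial (Fin 2) ℂ) (f : MvPowerSeries (Fin 2) ℂ) :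
    MvPowerSeries (Fin 2) ℂ :=
  fun d => ∑ ij ∈ Finset.range (deg d + 1) ×ˢ Finset.range (deg d + 1),
    MvPowerSeries.coeff (Finsupp.single 0 ij.1 + Finsupp.single 1 ij.2) f *
      MvPolynomial.coeff d (p ^ ij.1 * q ^ ij.2)

/-- The formal exponential `exp g = ∑ₖ gᵏ/k!` of a two-variable formal power series `g`
with zero constant term. -/
def expMv (g : MvPowerSeries (Fin 2) ℂ) : MvPowerSeries (Fin 2) ℂ :=
  fun d => ∑ k ∈ Finset.range (deg d + 1), MvPowerSeries.coeff d (g ^ k) / (k.factorial : ℂ)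

/-- `f(μ, −λ−μ)`. -/
def s₁ (f : MvPowerSeries (Fin 2) ℂ) : MvPowerSeries (Fin 2) ℂ :=
  sub2 (MvPolynomial.X 1) (-MvPolynomial.X 0 - MvPolynomial.X 1) f

/-- `f(λ, −λ−μ)`. -/
def s₂ (f : MvPowerSeries (Fin 2) ℂ) : MvPowerSeries (Fin 2) ℂ :=
  sub2 (MvPolynomial.X 0) (-MvPolynomial.X 0 - MvPolynomial.X 1) f

/-- `f(μ, λ)`. -/
def swapS (f : MvPowerSeries (Fin 2) ℂ) : MvPowerSeries (Fin 2) ℂ :=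
  sub2 (MvPolynomial.X 1) (MvPolynomial.X 0) f

/-- `f(−λ, −μ)`. -/
def negS (f : MvPowerSeries (Fin 2) ℂ) : MvPowerSeries (Fin 2) ℂ :=
  sub2 (-MvPolynomial.X 0) (-MvPolynomial.X 1) f

/-- Equation (1.5b), the compressed hexagon equation:
`λμ(λ+μ)·( f(λ,μ) + e^{μ}·f(μ,−λ−μ) + e^{−λ}·f(λ,−λ−μ) ) = λ(e^{μ} − 1) + μ(e^{−λ} − 1)`. -/
def Eq15b (f : MvPowerSeries (Fin 2) ℂ) : Prop :=
  (X 0 : MvPowerSeries (Fin 2) ℂ) * X 1 * (X 0 + X 1) *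
      (f + expMv (X 1) * s₁ f + expMv (-X 0) * s₂ f)
    = X 0 * (expMv (X 1) - 1) + X 1 * (expMv (-X 0) - 1)


section Infra

abbrev Nf (i j : ℕ) : Fin 2 →₀ ℕ := Finsupp.single 0 i + Finsupp.single 1 j

lemma Nf_apply0 (i j : ℕ) : Nf i j 0 = i := by simp [Nf]
lemma Nf_apply1 (i j : ℕ) : Nf i j 1 = j := by simp [Nf]
lemma eq_Nf (d : Fin 2 →₀ ℕ) : d = Nf (d 0) (d 1) := by
  ext x; fin_cases x <;> simp [Nf]
lemma Nf_inj {i j i' j' : ℕ} (h : Nf i j = Nf i' j') : i = i' ∧ j = j' := by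
  constructor
  · have := congrArg (fun d => d 0) h; simpa [Nf] using this
  · have := congrArg (fun d => d 1) h; simpa [Nf] using this

lemma deg_Nf (i j : ℕ) : deg (Nf i j) = i + j := by simp [deg, Nf]
lemma deg_add (u v : Fin 2 →₀ ℕ) : deg (u + v) = deg u + deg v := by
  simp [deg]; ring
lemma Nf_add (a b c e : ℕ) : Nf a b + Nf c e = Nf (a + c) (b + e) := by
  ext x; fin_cases x <;> simp [Nf]
lemma degree_eq_deg (d : Fin 2 →₀ ℕ) : d.degree = deg d := by
  rw [Finsupp.degree]
  have : deg d = ∑ i : Fin 2, d i := by rw [Fin.sum_univ_two]; rfl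
  rw [this]
  exact Finset.sum_subset (Finset.subset_univ _)
    (by intro x _ hx; simpa using Finsupp.notMem_support_iff.mp hx)

lemma coeff_apply (f : MvPowerSeries (Fin 2) ℂ) (d : Fin 2 →₀ ℕ) :
    MvPowerSeries.coeff d f = f d := rfl

lemma coeff_sub2 (p q : MvPolynomial (Fin 2) ℂ) (f : MvPowerSeries (Fin 2) ℂ) (d : Fin 2 →₀ ℕ) :
    MvPowerSeries.coeff d (sub2 p q f)
      = ∑ ij ∈ Finset.range (deg d + 1) ×ˢ Finset.range (deg d + 1),
          MvPowerSeries.coeff (Nf ij.1 ij.2) f * MvPolynomial.coeff d (p ^ ij.1 * q ^ ij.2) := rfl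

lemma coeff_pq_eq_zero {p q : MvPolynomial (Fin 2) ℂ}
    (hp : p.IsHomogeneous 1) (hq : q.IsHomogeneous 1) {d : Fin 2 →₀ ℕ} {i j : ℕ}
    (h : i + j ≠ deg d) : MvPolynomial.coeff d (p ^ i * q ^ j) = 0 := by
  have hh : (p ^ i * q ^ j).IsHomogeneous (i + j) := by
    simpa using (hp.pow i).mul (hq.pow j)
  exact hh.coeff_eq_zero (by rw [degree_eq_deg]; omega)

lemma coeff_sub2_ext {p q : MvPolynomial (Fin 2) ℂ}
    (hp : p.IsHomogeneous 1) (hq : q.IsHomogeneous 1) (f : MvPowerSeries (Fin 2) ℂ)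
    (d : Fin 2 →₀ ℕ) {N : ℕ} (hN : deg d ≤ N) :
    MvPowerSeries.coeff d (sub2 p q f)
      = ∑ ij ∈ Finset.range (N + 1) ×ˢ Finset.range (N + 1),
          MvPowerSeries.coeff (Nf ij.1 ij.2) f * MvPolynomial.coeff d (p ^ ij.1 * q ^ ij.2) := by
  rw [coeff_sub2]
  apply Finset.sum_subset
  · apply Finset.product_subset_product <;> exact Finset.range_subset_range.mpr (by omega)
  · intro x _ hx
    simp only [Finset.mem_product, Finset.mem_range] at hx
    have hor : deg d + 1 ≤ x.1 ∨ deg d + 1 ≤ x.2 := by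
      by_contra hcon; push_neg at hcon; exact hx ⟨by omega, by omega⟩
    rw [coeff_pq_eq_zero hp hq (by omega), mul_zero]

lemma sum_antidiagonal_Nf {M : Type*} [AddCommMonoid M] (i j : ℕ)
    (F : (Fin 2 →₀ ℕ) → (Fin 2 →₀ ℕ) → M) :
    ∑ xy ∈ Finset.HasAntidiagonal.antidiagonal (Nf i j), F xy.1 xy.2
      = ∑ ac ∈ Finset.HasAntidiagonal.antidiagonal i, ∑ be ∈ Finset.HasAntidiagonal.antidiagonal j,
          F (Nf ac.1 be.1) (Nf ac.2 be.2) := by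
  rw [← Finset.sum_product']
  apply Finset.sum_nbij' (i := fun xy => ((xy.1 0, xy.2 0), (xy.1 1, xy.2 1)))
    (j := fun w => (Nf w.1.1 w.2.1, Nf w.1.2 w.2.2))
  · intro a ha
    rw [Finset.HasAntidiagonal.mem_antidiagonal] at ha
    simp only [Finset.mem_product, Finset.HasAntidiagonal.mem_antidiagonal]
    constructor
    · have := congrArg (fun d => d 0) ha; simpa [Nf] using this
    · have := congrArg (fun d => d 1) ha; simpa [Nf] using this
  · intro a ha
    simp only [Finset.mem_product, Finset.HasAntidiagonal.mem_antidiagonal] at ha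
    rw [Finset.HasAntidiagonal.mem_antidiagonal, Nf_add, ha.1, ha.2]
  · intro a _
    show (Nf (a.1 0) (a.1 1), Nf (a.2 0) (a.2 1)) = a
    rw [← eq_Nf, ← eq_Nf]
  · intro a _; simp [Nf_apply0, Nf_apply1]
  · intro a _
    show F a.1 a.2 = F (Nf (a.1 0) (a.1 1)) (Nf (a.2 0) (a.2 1))
    rw [← eq_Nf, ← eq_Nf]

lemma tri_to_sq {M : Type*} [AddCommMonoid M] (D : ℕ) (G : ℕ → ℕ → M)
    (hG : ∀ a c, D < a + c → G a c = 0) :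
    ∑ i ∈ Finset.range (D + 1), ∑ ac ∈ Finset.HasAntidiagonal.antidiagonal i, G ac.1 ac.2
      = ∑ ac ∈ Finset.range (D + 1) ×ˢ Finset.range (D + 1), G ac.1 ac.2 := by
  have key : ∀ i ∈ Finset.range (D + 1),
      ∑ ac ∈ Finset.HasAntidiagonal.antidiagonal i, G ac.1 ac.2
        = ∑ ac ∈ Finset.range (D + 1) ×ˢ Finset.range (D + 1),
            if ac.1 + ac.2 = i then G ac.1 ac.2 else 0 := by
    intro i hi
    rw [Finset.mem_range] at hi
    rw [← Finset.sum_filter]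
    apply Finset.sum_congr _ (fun _ _ => rfl)
    ext ac
    simp only [Finset.HasAntidiagonal.mem_antidiagonal, Finset.mem_filter, Finset.mem_product, Finset.mem_range]
    omega
  rw [Finset.sum_congr rfl key, Finset.sum_comm]
  apply Finset.sum_congr rfl
  intro ac hac
  rcases le_or_gt (ac.1 + ac.2) D with h | h
  · rw [Finset.sum_ite_eq (Finset.range (D+1)) (ac.1+ac.2) (fun _ => G ac.1 ac.2)]
    simp [Nat.lt_succ_iff.mpr h]
  · have hz : ∀ i ∈ Finset.range (D+1), (if ac.1 + ac.2 = i then G ac.1 ac.2 else 0) = 0 := by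
      intro i hi; rw [Finset.mem_range] at hi
      rw [if_neg (by omega)]
    rw [Finset.sum_congr rfl hz, Finset.sum_const_zero, hG _ _ h]

theorem sub2_mul {p q : MvPolynomial (Fin 2) ℂ}
    (hp : p.IsHomogeneous 1) (hq : q.IsHomogeneous 1) (f g : MvPowerSeries (Fin 2) ℂ) :
    sub2 p q (f * g) = sub2 p q f * sub2 p q g := by
  ext d
  set D := deg d with hD
  set sq := Finset.range (D + 1) ×ˢ Finset.range (D + 1) with hsq
  -- the common canonical term
  set T : ℕ → ℕ → ℕ → ℕ → ℂ := fun a b c e =>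
    MvPowerSeries.coeff (Nf a b) f * MvPowerSeries.coeff (Nf c e) g *
      MvPolynomial.coeff d (p ^ (a + c) * q ^ (b + e)) with hT
  have hTz : ∀ a b c e, D < a + c + (b + e) → T a b c e = 0 := by
    intro a b c e h
    rw [hT]
    dsimp only
    rw [coeff_pq_eq_zero hp hq (by omega), mul_zero]
  -- LHS
  have hL : MvPowerSeries.coeff d (sub2 p q (f * g))
      = ∑ ac ∈ sq, ∑ be ∈ sq, T ac.1 be.1 ac.2 be.2 := by
    rw [coeff_sub2]
    have step1 : ∀ ij ∈ sq,
        MvPowerSeries.coeff (Nf ij.1 ij.2) (f * g) * MvPolynomial.coeff d (p ^ ij.1 * q ^ ij.2)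
          = ∑ ac ∈ Finset.HasAntidiagonal.antidiagonal ij.1, ∑ be ∈ Finset.HasAntidiagonal.antidiagonal ij.2,
              T ac.1 be.1 ac.2 be.2 := by
      intro ij _
      rw [MvPowerSeries.coeff_mul, sum_antidiagonal_Nf ij.1 ij.2
        (fun x y => MvPowerSeries.coeff x (f) * MvPowerSeries.coeff y (g)),
        Finset.sum_mul]
      apply Finset.sum_congr rfl; intro ac hac
      rw [Finset.sum_mul]
      apply Finset.sum_congr rfl; intro be hbe
      rw [Finset.HasAntidiagonal.mem_antidiagonal] at hac hbe
      rw [hT]; dsimp only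
      rw [hac, hbe]
    rw [Finset.sum_congr rfl step1, hsq, Finset.sum_product]
    -- now : ∑ i ∈ range, ∑ j ∈ range, ∑ ac ∈ AD i, ∑ be ∈ AD j, T
    have step2 : ∀ i ∈ Finset.range (D+1),
        (∑ j ∈ Finset.range (D+1), ∑ ac ∈ Finset.HasAntidiagonal.antidiagonal i,
            ∑ be ∈ Finset.HasAntidiagonal.antidiagonal j, T ac.1 be.1 ac.2 be.2)
        = ∑ ac ∈ Finset.HasAntidiagonal.antidiagonal i, ∑ be ∈ sq, T ac.1 be.1 ac.2 be.2 := by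
      intro i _
      rw [Finset.sum_comm]
      apply Finset.sum_congr rfl; intro ac _
      exact tri_to_sq D (fun b e => T ac.1 b ac.2 e) (fun b e h => hTz _ _ _ _ (by omega))
    rw [Finset.sum_congr rfl step2]
    exact tri_to_sq D (fun a c => ∑ be ∈ sq, T a be.1 c be.2) (by
      intro a c h
      apply Finset.sum_eq_zero
      intro be _
      exact hTz _ _ _ _ (by omega))
  -- RHS
  have hR : MvPowerSeries.coeff d (sub2 p q f * sub2 p q g)
      = ∑ ab ∈ sq, ∑ ce ∈ sq, T ab.1 ab.2 ce.1 ce.2 := by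
    rw [MvPowerSeries.coeff_mul]
    have step1 : ∀ uv ∈ Finset.HasAntidiagonal.antidiagonal d,
        MvPowerSeries.coeff uv.1 (sub2 p q f) * MvPowerSeries.coeff uv.2 (sub2 p q g)
        = ∑ ab ∈ sq, ∑ ce ∈ sq,
            MvPowerSeries.coeff (Nf ab.1 ab.2) f * MvPowerSeries.coeff (Nf ce.1 ce.2) g *
              (MvPolynomial.coeff uv.1 (p ^ ab.1 * q ^ ab.2) *
               MvPolynomial.coeff uv.2 (p ^ ce.1 * q ^ ce.2)) := by
      intro uv huv
      rw [Finset.HasAntidiagonal.mem_antidiagonal] at huv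
      have h1 : deg uv.1 ≤ D := by rw [hD, ← huv, deg_add]; omega
      have h2 : deg uv.2 ≤ D := by rw [hD, ← huv, deg_add]; omega
      rw [coeff_sub2_ext hp hq f uv.1 h1, coeff_sub2_ext hp hq g uv.2 h2, Finset.sum_mul_sum]
      apply Finset.sum_congr rfl; intro ab _
      apply Finset.sum_congr rfl; intro ce _
      ring
    rw [Finset.sum_congr rfl step1, Finset.sum_comm]
    apply Finset.sum_congr rfl; intro ab _
    rw [Finset.sum_comm]
    apply Finset.sum_congr rfl; intro ce _
    rw [← Finset.mul_sum, hT]; dsimp only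
    congr 1
    rw [← MvPolynomial.coeff_mul]
    congr 1
    ring
  rw [hL, hR]
  -- reindex ((a,c),(b,e)) ↦ ((a,b),(c,e))
  rw [← Finset.sum_product', ← Finset.sum_product']
  apply Finset.sum_nbij' (i := fun w => ((w.1.1, w.2.1), (w.1.2, w.2.2)))
    (j := fun w => ((w.1.1, w.2.1), (w.1.2, w.2.2)))
  · intro a ha
    simp only [hsq, Finset.mem_product, Finset.mem_range] at ha ⊢
    tauto
  · intro a ha
    simp only [hsq, Finset.mem_product, Finset.mem_range] at ha ⊢
    tauto
  · intro a _; rfl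
  · intro a _; rfl
  · intro a _; rfl


lemma deg_zero : deg 0 = 0 := rfl

def IsHomS (n : ℕ) (t : MvPowerSeries (Fin 2) ℂ) : Prop :=
  ∀ d, deg d ≠ n → MvPowerSeries.coeff d t = 0

lemma IsHomS.mul {m n : ℕ} {a b : MvPowerSeries (Fin 2) ℂ}
    (ha : IsHomS m a) (hb : IsHomS n b) : IsHomS (m + n) (a * b) := by
  intro d hd
  rw [MvPowerSeries.coeff_mul]
  apply Finset.sum_eq_zero
  intro uv huv
  rw [Finset.HasAntidiagonal.mem_antidiagonal] at huv
  have : deg uv.1 + deg uv.2 = deg d := by rw [← deg_add, huv]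
  rcases eq_or_ne (deg uv.1) m with h | h
  · rw [hb uv.2 (by omega), mul_zero]
  · rw [ha uv.1 h, zero_mul]

lemma IsHomS.pow {t : MvPowerSeries (Fin 2) ℂ} (ht : IsHomS 1 t) (k : ℕ) :
    IsHomS k (t ^ k) := by
  induction k with
  | zero =>
    intro d hd
    rw [pow_zero, MvPowerSeries.coeff_one, if_neg]
    intro h; subst h; exact hd deg_zero
  | succ k ih =>
    rw [pow_succ]
    exact ih.mul ht

lemma IsHomS.neg {n : ℕ} {t : MvPowerSeries (Fin 2) ℂ} (ht : IsHomS n t) : IsHomS n (-t) := by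
  intro d hd; rw [map_neg, ht d hd, neg_zero]

lemma IsHomS.add {n : ℕ} {s t : MvPowerSeries (Fin 2) ℂ} (hs : IsHomS n s) (ht : IsHomS n t) :
    IsHomS n (s + t) := by
  intro d hd; rw [map_add, hs d hd, ht d hd, add_zero]

lemma isHomS_X (i : Fin 2) : IsHomS 1 (X i : MvPowerSeries (Fin 2) ℂ) := by
  intro d hd
  rw [MvPowerSeries.coeff_X, if_neg]
  intro h; subst h
  apply hd
  fin_cases i <;> simp [deg]

lemma coeff_expMv (t : MvPowerSeries (Fin 2) ℂ) (d : Fin 2 →₀ ℕ) :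
    MvPowerSeries.coeff d (expMv t)
      = ∑ k ∈ Finset.range (deg d + 1), MvPowerSeries.coeff d (t ^ k) / (k.factorial : ℂ) := rfl

lemma coeff_expMv_hom {t : MvPowerSeries (Fin 2) ℂ} (ht : IsHomS 1 t) (d : Fin 2 →₀ ℕ) :
    MvPowerSeries.coeff d (expMv t)
      = MvPowerSeries.coeff d (t ^ (deg d)) / ((deg d).factorial : ℂ) := by
  rw [coeff_expMv]
  apply Finset.sum_eq_single
  · intro k _ hk
    rw [(ht.pow k) d (Ne.symm hk), zero_div]
  · intro h
    exact absurd (Finset.self_mem_range_succ (deg d)) h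

lemma expMv_zero : expMv 0 = 1 := by
  ext d
  rw [coeff_expMv]
  rw [Finset.sum_eq_single 0]
  · simp
  · intro k _ hk
    rw [zero_pow hk, map_zero, zero_div]
  · intro h
    simp at h

lemma constantCoeff_expMv (t : MvPowerSeries (Fin 2) ℂ) :
    MvPowerSeries.coeff 0 (expMv t) = 1 := by
  rw [coeff_expMv, deg_zero]
  simp

theorem expMv_add {s t : MvPowerSeries (Fin 2) ℂ} (hs : IsHomS 1 s) (ht : IsHomS 1 t) :
    expMv (s + t) = expMv s * expMv t := by
  ext d
  set D := deg d with hD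
  rw [coeff_expMv_hom (hs.add ht), MvPowerSeries.coeff_mul]
  have hrhs : ∀ uv ∈ Finset.HasAntidiagonal.antidiagonal d,
      MvPowerSeries.coeff uv.1 (expMv s) * MvPowerSeries.coeff uv.2 (expMv t)
        = MvPowerSeries.coeff uv.1 (s ^ deg uv.1) * MvPowerSeries.coeff uv.2 (t ^ deg uv.2)
            / (((deg uv.1).factorial * (deg uv.2).factorial : ℕ) : ℂ) := by
    intro uv _
    rw [coeff_expMv_hom hs, coeff_expMv_hom ht]
    push_cast
    field_simp
  rw [Finset.sum_congr rfl hrhs, add_pow, map_sum, Finset.sum_div]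
  have hlhs : ∀ k ∈ Finset.range (D + 1),
      MvPowerSeries.coeff d (s ^ k * t ^ (D - k) * (D.choose k : MvPowerSeries (Fin 2) ℂ))
          / (D.factorial : ℂ)
        = ∑ uv ∈ Finset.HasAntidiagonal.antidiagonal d,
            MvPowerSeries.coeff uv.1 (s ^ k) * MvPowerSeries.coeff uv.2 (t ^ (D - k))
              / ((k.factorial * (D - k).factorial : ℕ) : ℂ) := by
    intro k hk
    rw [Finset.mem_range, Nat.lt_succ_iff] at hk
    rw [show ((D.choose k : ℕ) : MvPowerSeries (Fin 2) ℂ)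
          = MvPowerSeries.C (σ := Fin 2) ((D.choose k : ℕ) : ℂ) by push_cast; rfl,
      MvPowerSeries.coeff_mul_C, MvPowerSeries.coeff_mul, Finset.sum_mul, Finset.sum_div]
    apply Finset.sum_congr rfl
    intro uv _
    have hfac : (k.factorial * (D - k).factorial : ℕ) * (D.choose k) = D.factorial := by
      rw [← Nat.choose_mul_factorial_mul_factorial hk]; ring
    have h1 : ((D.factorial : ℕ) : ℂ) ≠ 0 := Nat.cast_ne_zero.mpr (Nat.factorial_ne_zero D)
    have h2 : ((k.factorial * (D - k).factorial : ℕ) : ℂ) ≠ 0 :=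
      Nat.cast_ne_zero.mpr (by positivity)
    rw [div_eq_div_iff h1 h2]
    have hfc : ((k.factorial * (D - k).factorial : ℕ) : ℂ) * (D.choose k : ℂ)
        = (D.factorial : ℂ) := by exact_mod_cast congrArg (Nat.cast (R := ℂ)) hfac
    linear_combination ((MvPowerSeries.coeff uv.1 (s ^ k))
      * (MvPowerSeries.coeff uv.2 (t ^ (D - k)))) * hfc
  rw [Finset.sum_congr rfl hlhs, Finset.sum_comm]
  apply Finset.sum_congr rfl
  intro uv huv
  rw [Finset.HasAntidiagonal.mem_antidiagonal] at huv
  have hdeg : deg uv.1 + deg uv.2 = D := by rw [hD, ← huv, deg_add]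
  rw [Finset.sum_eq_single (deg uv.1)]
  · rw [show D - deg uv.1 = deg uv.2 by omega]
  · intro k _ hk
    rw [(hs.pow k) uv.1 (Ne.symm hk), zero_mul, zero_div]
  · intro h
    exact absurd (Finset.mem_range.mpr (by omega)) h


end Infra
-- ## sub2: additive structure and special values

lemma sub2_add (p q : MvPolynomial (Fin 2) ℂ) (f g : MvPowerSeries (Fin 2) ℂ) :
    sub2 p q (f + g) = sub2 p q f + sub2 p q g := by
  ext d
  rw [map_add, coeff_sub2, coeff_sub2, coeff_sub2, ← Finset.sum_add_distrib]
  apply Finset.sum_congr rfl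
  intro ij _
  rw [map_add, add_mul]

lemma sub2_zero (p q : MvPolynomial (Fin 2) ℂ) : sub2 p q 0 = 0 := by
  ext d
  rw [coeff_sub2, map_zero]
  apply Finset.sum_eq_zero
  intro ij _
  rw [map_zero, zero_mul]

lemma sub2_neg (p q : MvPolynomial (Fin 2) ℂ) (f : MvPowerSeries (Fin 2) ℂ) :
    sub2 p q (-f) = -(sub2 p q f) := by
  ext d
  rw [map_neg, coeff_sub2, coeff_sub2, ← Finset.sum_neg_distrib]
  apply Finset.sum_congr rfl
  intro ij _
  rw [map_neg, neg_mul]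

lemma sub2_sub (p q : MvPolynomial (Fin 2) ℂ) (f g : MvPowerSeries (Fin 2) ℂ) :
    sub2 p q (f - g) = sub2 p q f - sub2 p q g := by
  rw [sub_eq_add_neg, sub2_add, sub2_neg, sub_eq_add_neg]

lemma Nf_eq_zero_iff (i j : ℕ) : Nf i j = 0 ↔ i = 0 ∧ j = 0 := by
  constructor
  · intro h
    have h0 := congrArg (fun d => d 0) h
    have h1 := congrArg (fun d => d 1) h
    simp [Nf] at h0 h1
    exact ⟨h0, h1⟩
  · rintro ⟨rfl, rfl⟩; simp [Nf]

lemma sub2_one (p q : MvPolynomial (Fin 2) ℂ) : sub2 p q 1 = 1 := by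
  ext d
  rw [coeff_sub2, MvPowerSeries.coeff_one]
  rw [Finset.sum_eq_single (0, 0)]
  · rw [MvPowerSeries.coeff_one, if_pos (by simp [Nf]), pow_zero, pow_zero, one_mul, one_mul,
      MvPolynomial.coeff_one]
    by_cases h : d = 0
    · rw [if_pos h, if_pos (by rw [h])]
    · rw [if_neg h, if_neg (fun hh => h (by rw [hh]))]
  · intro ij _ hij
    rw [MvPowerSeries.coeff_one, if_neg, zero_mul]
    intro h
    rcases (Nf_eq_zero_iff ij.1 ij.2).mp h with ⟨h1, h2⟩
    exact hij (Prod.ext h1 h2)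
  · intro h
    exact absurd (Finset.mem_product.mpr ⟨Finset.mem_range.mpr (by omega),
      Finset.mem_range.mpr (by omega)⟩) h

lemma Nf_eq_single0_iff (i j : ℕ) : Nf i j = Finsupp.single 0 1 ↔ i = 1 ∧ j = 0 := by
  constructor
  · intro h
    have h0 := congrArg (fun d => d 0) h
    have h1 := congrArg (fun d => d 1) h
    simp [Nf] at h0 h1
    exact ⟨h0, h1⟩
  · rintro ⟨rfl, rfl⟩; ext x; fin_cases x <;> simp [Nf]

lemma Nf_eq_single1_iff (i j : ℕ) : Nf i j = Finsupp.single 1 1 ↔ i = 0 ∧ j = 1 := by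
  constructor
  · intro h
    have h0 := congrArg (fun d => d 0) h
    have h1 := congrArg (fun d => d 1) h
    simp [Nf] at h0 h1
    exact ⟨h0, h1⟩
  · rintro ⟨rfl, rfl⟩; ext x; fin_cases x <;> simp [Nf]

lemma sub2_X0 {p q : MvPolynomial (Fin 2) ℂ} (hp : p.IsHomogeneous 1) :
    sub2 p q (X 0) = (p : MvPowerSeries (Fin 2) ℂ) := by
  ext d
  rw [coeff_sub2, MvPolynomial.coeff_coe]
  rw [Finset.sum_eq_single (1, 0)]
  · rw [MvPowerSeries.coeff_X, if_pos ((Nf_eq_single0_iff 1 0).mpr ⟨rfl, rfl⟩), one_mul,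
      pow_one, pow_zero, mul_one]
  · intro ij _ hij
    rw [MvPowerSeries.coeff_X, if_neg, zero_mul]
    intro h
    rcases (Nf_eq_single0_iff ij.1 ij.2).mp h with ⟨h1, h2⟩
    exact hij (Prod.ext h1 h2)
  · intro h
    have hd : ¬ (1 ≤ deg d) := by
      intro hh
      exact h (Finset.mem_product.mpr ⟨Finset.mem_range.mpr (by omega),
        Finset.mem_range.mpr (by omega)⟩)
    have hd0 : deg d = 0 := by omega
    rw [pow_one, pow_zero, mul_one, hp.coeff_eq_zero (by rw [degree_eq_deg, hd0]; omega), mul_zero]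

lemma sub2_X1 {p q : MvPolynomial (Fin 2) ℂ} (hq : q.IsHomogeneous 1) :
    sub2 p q (X 1) = (q : MvPowerSeries (Fin 2) ℂ) := by
  ext d
  rw [coeff_sub2, MvPolynomial.coeff_coe]
  rw [Finset.sum_eq_single (0, 1)]
  · rw [MvPowerSeries.coeff_X, if_pos ((Nf_eq_single1_iff 0 1).mpr ⟨rfl, rfl⟩), one_mul,
      pow_one, pow_zero, one_mul]
  · intro ij _ hij
    rw [MvPowerSeries.coeff_X, if_neg, zero_mul]
    intro h
    rcases (Nf_eq_single1_iff ij.1 ij.2).mp h with ⟨h1, h2⟩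
    exact hij (Prod.ext h1 h2)
  · intro h
    have hd : ¬ (1 ≤ deg d) := by
      intro hh
      exact h (Finset.mem_product.mpr ⟨Finset.mem_range.mpr (by omega),
        Finset.mem_range.mpr (by omega)⟩)
    have hd0 : deg d = 0 := by omega
    rw [pow_zero, pow_one, one_mul, hq.coeff_eq_zero (by rw [degree_eq_deg, hd0]; omega), mul_zero]

lemma sub2_pow {p q : MvPolynomial (Fin 2) ℂ}
    (hp : p.IsHomogeneous 1) (hq : q.IsHomogeneous 1) (f : MvPowerSeries (Fin 2) ℂ) (k : ℕ) :
    sub2 p q (f ^ k) = (sub2 p q f) ^ k := by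
  induction k with
  | zero => rw [pow_zero, pow_zero, sub2_one]
  | succ k ih => rw [pow_succ, pow_succ, sub2_mul hp hq, ih]

lemma sub2_homS {p q : MvPolynomial (Fin 2) ℂ}
    (hp : p.IsHomogeneous 1) (hq : q.IsHomogeneous 1) {n : ℕ} {t : MvPowerSeries (Fin 2) ℂ}
    (ht : IsHomS n t) : IsHomS n (sub2 p q t) := by
  intro d hd
  rw [coeff_sub2]
  apply Finset.sum_eq_zero
  intro ij _
  rcases eq_or_ne (ij.1 + ij.2) (deg d) with h | h
  · rw [ht (Nf ij.1 ij.2) (by rw [deg_Nf]; omega), zero_mul]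
  · rw [coeff_pq_eq_zero hp hq h, mul_zero]

lemma sub2_expMv {p q : MvPolynomial (Fin 2) ℂ}
    (hp : p.IsHomogeneous 1) (hq : q.IsHomogeneous 1) {t : MvPowerSeries (Fin 2) ℂ}
    (ht : IsHomS 1 t) : sub2 p q (expMv t) = expMv (sub2 p q t) := by
  ext d
  rw [coeff_expMv_hom (sub2_homS hp hq ht), ← sub2_pow hp hq, coeff_sub2, coeff_sub2,
    Finset.sum_div]
  apply Finset.sum_congr rfl
  intro ij _
  rcases eq_or_ne (ij.1 + ij.2) (deg d) with h | h
  · rw [coeff_expMv_hom ht, deg_Nf, h, div_mul_eq_mul_div]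
  · rw [coeff_pq_eq_zero hp hq h, mul_zero, mul_zero, zero_div]

-- ## swap lemmas

lemma coeff_swapS (h : MvPowerSeries (Fin 2) ℂ) (d : Fin 2 →₀ ℕ) :
    MvPowerSeries.coeff d (swapS h) = MvPowerSeries.coeff (Nf (d 1) (d 0)) h := by
  show MvPowerSeries.coeff d (sub2 (MvPolynomial.X 1) (MvPolynomial.X 0) h) = _
  rw [coeff_sub2]
  have hmono : ∀ i j : ℕ, (MvPolynomial.X (1 : Fin 2) : MvPolynomial (Fin 2) ℂ) ^ i
      * MvPolynomial.X 0 ^ j = MvPolynomial.monomial (Nf j i) 1 := by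
    intro i j
    rw [MvPolynomial.X_pow_eq_monomial, MvPolynomial.X_pow_eq_monomial,
      MvPolynomial.monomial_mul, one_mul]
    congr 1
    rw [add_comm]
  rw [Finset.sum_eq_single (d 1, d 0)]
  · rw [hmono, MvPolynomial.coeff_monomial, if_pos (eq_Nf d).symm, mul_one]
  · intro ij _ hij
    rw [hmono, MvPolynomial.coeff_monomial, if_neg, mul_zero]
    intro hh
    rw [eq_Nf d] at hh
    rcases Nf_inj hh with ⟨h1, h2⟩
    exact hij (Prod.ext (by omega) (by omega))
  · intro hmem
    exact absurd (Finset.mem_product.mpr ⟨Finset.mem_range.mpr (by simp [deg]),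
      Finset.mem_range.mpr (by simp [deg])⟩) hmem

lemma swapS_swapS (h : MvPowerSeries (Fin 2) ℂ) : swapS (swapS h) = h := by
  ext d
  rw [coeff_swapS, coeff_swapS, Nf_apply0, Nf_apply1, ← eq_Nf]

lemma mapDomain_swap (d : Fin 2 →₀ ℕ) :
    Finsupp.mapDomain (Equiv.swap (0 : Fin 2) 1) d = Nf (d 1) (d 0) := by
  ext x
  rw [Finsupp.mapDomain_equiv_apply]
  fin_cases x <;> simp [Nf]

lemma coeff_rename_swap (φ : MvPolynomial (Fin 2) ℂ) (d : Fin 2 →₀ ℕ) :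
    MvPolynomial.coeff d (MvPolynomial.rename (Equiv.swap (0 : Fin 2) 1) φ)
      = MvPolynomial.coeff (Nf (d 1) (d 0)) φ := by
  have := MvPolynomial.coeff_rename_mapDomain (Equiv.swap (0 : Fin 2) 1)
    (Equiv.injective _) φ (Nf (d 1) (d 0))
  rw [mapDomain_swap] at this
  rw [Nf_apply0, Nf_apply1, ← eq_Nf] at this
  exact this

lemma swapS_sub2 (p q : MvPolynomial (Fin 2) ℂ) (h : MvPowerSeries (Fin 2) ℂ) :
    swapS (sub2 p q h) = sub2 (MvPolynomial.rename (Equiv.swap (0 : Fin 2) 1) p)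
      (MvPolynomial.rename (Equiv.swap (0 : Fin 2) 1) q) h := by
  ext d
  rw [coeff_swapS, coeff_sub2, coeff_sub2]
  rw [show deg (Nf (d 1) (d 0)) = deg d by rw [deg_Nf, deg]; omega]
  apply Finset.sum_congr rfl
  intro ij _
  congr 1
  rw [← map_pow, ← map_pow, ← map_mul, coeff_rename_swap]

lemma sub2_swapS (p q : MvPolynomial (Fin 2) ℂ) (h : MvPowerSeries (Fin 2) ℂ) :
    sub2 p q (swapS h) = sub2 q p h := by
  ext d
  rw [coeff_sub2, coeff_sub2]
  apply Finset.sum_nbij' (i := fun ij => (ij.2, ij.1)) (j := fun ij => (ij.2, ij.1))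
  · intro a ha
    simp only [Finset.mem_product, Finset.mem_range] at ha ⊢
    tauto
  · intro a ha
    simp only [Finset.mem_product, Finset.mem_range] at ha ⊢
    tauto
  · intro a _; rfl
  · intro a _; rfl
  · intro a _
    rw [coeff_swapS]
    simp only [Nf_apply0, Nf_apply1]
    rw [mul_comm (p ^ a.1) (q ^ a.2)]

-- ## nonvanishing

lemma coeff_deg1_expMv_sub_one {t : MvPowerSeries (Fin 2) ℂ} (ht : IsHomS 1 t)
    {d : Fin 2 →₀ ℕ} (hd : deg d = 1) :
    MvPowerSeries.coeff d (expMv t - 1) = MvPowerSeries.coeff d t := by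
  rw [map_sub, coeff_expMv_hom ht, hd, MvPowerSeries.coeff_one, pow_one,
    if_neg (fun h => by rw [h, deg_zero] at hd; exact one_ne_zero hd.symm)]
  norm_num

lemma expMv_sub_one_ne_zero {t : MvPowerSeries (Fin 2) ℂ} (ht : IsHomS 1 t)
    {d : Fin 2 →₀ ℕ} (hd : deg d = 1)
    (hc : MvPowerSeries.coeff d t ≠ 0) : expMv t - 1 ≠ 0 := by
  intro h
  apply hc
  rw [← coeff_deg1_expMv_sub_one ht hd, h, map_zero]

lemma expMv_ne_zero (t : MvPowerSeries (Fin 2) ℂ) : expMv t ≠ 0 := by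
  intro h
  have := constantCoeff_expMv t
  rw [h, map_zero] at this
  exact one_ne_zero (α := ℂ) this.symm

lemma X_ne_zero' (i : Fin 2) : (X i : MvPowerSeries (Fin 2) ℂ) ≠ 0 := by
  intro h
  have : MvPowerSeries.coeff (Finsupp.single i 1) (X i : MvPowerSeries (Fin 2) ℂ) = 0 := by
    rw [h, map_zero]
  rw [MvPowerSeries.coeff_X, if_pos rfl] at this
  exact one_ne_zero this


/-- for symmetric `f`, with `C` the generating function of the extended
Bernoulli numbers (characterized by its defining identity) and `g` determined by
`(e^{λ} − 1)·g = λ·f`, the identity (i) of Proposition 3.9 is equivalent to the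
compressed hexagon equation (1.5b). -/
theorem hexagon_equiv (f C g : MvPowerSeries (Fin 2) ℂ)
    (hf : swapS f = f)
    (hC : (X 0 : MvPowerSeries (Fin 2) ℂ) * X 1 * (expMv (X 0 + X 1) - 1) * C
        = (X 0 + X 1) * (expMv (X 1) - 1) - X 1 * (expMv (X 0 + X 1) - 1))
    (hg : (expMv (X 0) - 1) * g = X 0 * f) :
    (g * (1 - X 1 * C) + s₁ g * (1 + X 0 * C)
        + sub2 (-MvPolynomial.X 0 - MvPolynomial.X 1) (MvPolynomial.X 0) g + C = 0)
      ↔ Eq15b f := by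
  have hX0 : (MvPolynomial.X 0 : MvPolynomial (Fin 2) ℂ).IsHomogeneous 1 :=
    MvPolynomial.isHomogeneous_X _ _
  have hX1 : (MvPolynomial.X 1 : MvPolynomial (Fin 2) ℂ).IsHomogeneous 1 :=
    MvPolynomial.isHomogeneous_X _ _
  have hrho : (-MvPolynomial.X 0 - MvPolynomial.X 1 : MvPolynomial (Fin 2) ℂ).IsHomogeneous 1 := by
    rw [sub_eq_add_neg]
    exact hX0.neg.add hX1.neg
  have crho : ((-MvPolynomial.X 0 - MvPolynomial.X 1 : MvPolynomial (Fin 2) ℂ) :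
      MvPowerSeries (Fin 2) ℂ) = -(X 0 + X 1) := by
    have : ((-MvPolynomial.X 0 - MvPolynomial.X 1 : MvPolynomial (Fin 2) ℂ) :
        MvPowerSeries (Fin 2) ℂ)
        = MvPolynomial.coeToMvPowerSeries.ringHom (-MvPolynomial.X 0 - MvPolynomial.X 1) := rfl
    rw [this, map_sub, map_neg, MvPolynomial.coeToMvPowerSeries.ringHom_apply,
      MvPolynomial.coeToMvPowerSeries.ringHom_apply, MvPolynomial.coe_X, MvPolynomial.coe_X]
    ring
  -- substituted versions of hg
  have hg1 : (expMv (X 1) - 1) * s₁ g = X 1 * s₁ f := by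
    have h := congrArg (sub2 (MvPolynomial.X 1) (-MvPolynomial.X 0 - MvPolynomial.X 1)) hg
    rw [sub2_mul hX1 hrho, sub2_mul hX1 hrho, sub2_sub, sub2_one,
      sub2_expMv hX1 hrho (isHomS_X 0), sub2_X0 hX1, MvPolynomial.coe_X] at h
    exact h
  have hsymm : ∀ p q : MvPolynomial (Fin 2) ℂ, sub2 p q f = sub2 q p f := by
    intro p q
    rw [← sub2_swapS q p f, hf]
  have hf2 : sub2 (-MvPolynomial.X 0 - MvPolynomial.X 1) (MvPolynomial.X 0) f = s₂ f :=
    hsymm _ _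
  have hg2 : (expMv (-(X 0 + X 1)) - 1) * sub2 (-MvPolynomial.X 0 - MvPolynomial.X 1)
      (MvPolynomial.X 0) g = -((X 0 + X 1) * s₂ f) := by
    have h := congrArg (sub2 (-MvPolynomial.X 0 - MvPolynomial.X 1) (MvPolynomial.X 0)) hg
    rw [sub2_mul hrho hX0, sub2_mul hrho hX0, sub2_sub, sub2_one,
      sub2_expMv hrho hX0 (isHomS_X 0), sub2_X0 hrho, crho, hf2] at h
    rw [h]
    ring
  -- exponential relations
  have u1 : expMv (X 0) * expMv (-X 0) = 1 := by
    rw [← expMv_add (isHomS_X 0) (isHomS_X 0).neg, add_neg_cancel, expMv_zero]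
  have u2 : expMv (X 1) * expMv (-X 1) = 1 := by
    rw [← expMv_add (isHomS_X 1) (isHomS_X 1).neg, add_neg_cancel, expMv_zero]
  have hS : IsHomS 1 ((X 0 : MvPowerSeries (Fin 2) ℂ) + X 1) := (isHomS_X 0).add (isHomS_X 1)
  have u3 : expMv (X 0 + X 1) * expMv (-(X 0 + X 1)) = 1 := by
    rw [← expMv_add hS hS.neg, add_neg_cancel, expMv_zero]
  have u4 : expMv (-X 0) * expMv (-X 1) = expMv (-(X 0 + X 1)) := by
    rw [← expMv_add (isHomS_X 0).neg (isHomS_X 1).neg]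
    congr 1
    ring
  -- nonvanishing
  have hlam : (X 0 : MvPowerSeries (Fin 2) ℂ) ≠ 0 := X_ne_zero' 0
  have hmu : (X 1 : MvPowerSeries (Fin 2) ℂ) ≠ 0 := X_ne_zero' 1
  have hA : (expMv (X 0) : MvPowerSeries (Fin 2) ℂ) - 1 ≠ 0 := by
    apply expMv_sub_one_ne_zero (isHomS_X 0) (deg_Nf 1 0)
    rw [MvPowerSeries.coeff_X, if_pos ((Nf_eq_single0_iff 1 0).mpr ⟨rfl, rfl⟩)]
    exact one_ne_zero
  have hB : (expMv (X 1) : MvPowerSeries (Fin 2) ℂ) - 1 ≠ 0 := by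
    apply expMv_sub_one_ne_zero (isHomS_X 1) (d := Nf 0 1) (by rw [deg_Nf])
    rw [MvPowerSeries.coeff_X, if_pos ((Nf_eq_single1_iff 0 1).mpr ⟨rfl, rfl⟩)]
    exact one_ne_zero
  have hR : (expMv (-(X 0 + X 1)) : MvPowerSeries (Fin 2) ℂ) - 1 ≠ 0 := by
    apply expMv_sub_one_ne_zero hS.neg (deg_Nf 1 0)
    rw [map_neg, map_add, MvPowerSeries.coeff_X, MvPowerSeries.coeff_X,
      if_pos ((Nf_eq_single0_iff 1 0).mpr ⟨rfl, rfl⟩),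
      if_neg (fun h => one_ne_zero ((Nf_eq_single1_iff 1 0).mp h).1)]
    norm_num
  have hELm : (expMv (-X 0) : MvPowerSeries (Fin 2) ℂ) ≠ 0 := expMv_ne_zero _
  -- the swap automorphism facts
  have sadd : ∀ a b : MvPowerSeries (Fin 2) ℂ, swapS (a + b) = swapS a + swapS b :=
    fun a b => sub2_add _ _ a b
  have ssub : ∀ a b : MvPowerSeries (Fin 2) ℂ, swapS (a - b) = swapS a - swapS b :=
    fun a b => sub2_sub _ _ a b
  have smul : ∀ a b : MvPowerSeries (Fin 2) ℂ, swapS (a * b) = swapS a * swapS b :=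
    fun a b => sub2_mul hX1 hX0 a b
  have sone : swapS (1 : MvPowerSeries (Fin 2) ℂ) = 1 := sub2_one _ _
  have szero : swapS (0 : MvPowerSeries (Fin 2) ℂ) = 0 := sub2_zero _ _
  have tl : swapS (X 0 : MvPowerSeries (Fin 2) ℂ) = X 1 := by
    rw [show swapS (X 0 : MvPowerSeries (Fin 2) ℂ)
      = sub2 (MvPolynomial.X 1) (MvPolynomial.X 0) (X 0) from rfl, sub2_X0 hX1,
      MvPolynomial.coe_X]
  have tm : swapS (X 1 : MvPowerSeries (Fin 2) ℂ) = X 0 := by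
    rw [show swapS (X 1 : MvPowerSeries (Fin 2) ℂ)
      = sub2 (MvPolynomial.X 1) (MvPolynomial.X 0) (X 1) from rfl, sub2_X1 hX0,
      MvPolynomial.coe_X]
  have tEL : swapS (expMv (X 0)) = expMv (X 1) := by
    rw [show swapS (expMv (X 0))
      = sub2 (MvPolynomial.X 1) (MvPolynomial.X 0) (expMv (X 0)) from rfl,
      sub2_expMv hX1 hX0 (isHomS_X 0)]
    congr 1
  have tEm : swapS (expMv (X 1)) = expMv (X 0) := by
    rw [show swapS (expMv (X 1))
      = sub2 (MvPolynomial.X 1) (MvPolynomial.X 0) (expMv (X 1)) from rfl,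
      sub2_expMv hX1 hX0 (isHomS_X 1)]
    congr 1
  have tELm : swapS (expMv (-X 0)) = expMv (-X 1) := by
    rw [show swapS (expMv (-X 0))
      = sub2 (MvPolynomial.X 1) (MvPolynomial.X 0) (expMv (-X 0)) from rfl,
      sub2_expMv hX1 hX0 (isHomS_X 0).neg]
    congr 1
    rw [sub2_neg, sub2_X0 hX1, MvPolynomial.coe_X]
  have tEmm : swapS (expMv (-X 1)) = expMv (-X 0) := by
    rw [show swapS (expMv (-X 1))
      = sub2 (MvPolynomial.X 1) (MvPolynomial.X 0) (expMv (-X 1)) from rfl,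
      sub2_expMv hX1 hX0 (isHomS_X 1).neg]
    congr 1
    rw [sub2_neg, sub2_X1 hX0, MvPolynomial.coe_X]
  have rnX1 : MvPolynomial.rename (Equiv.swap (0 : Fin 2) 1) (MvPolynomial.X 1 :
      MvPolynomial (Fin 2) ℂ) = MvPolynomial.X 0 := by
    simp [MvPolynomial.rename_X]
  have rnX0 : MvPolynomial.rename (Equiv.swap (0 : Fin 2) 1) (MvPolynomial.X 0 :
      MvPolynomial (Fin 2) ℂ) = MvPolynomial.X 1 := by
    simp [MvPolynomial.rename_X]
  have rnrho : MvPolynomial.rename (Equiv.swap (0 : Fin 2) 1)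
      (-MvPolynomial.X 0 - MvPolynomial.X 1 : MvPolynomial (Fin 2) ℂ)
      = -MvPolynomial.X 0 - MvPolynomial.X 1 := by
    rw [map_sub, map_neg, rnX0, rnX1]
    ring
  have tf1 : swapS (s₁ f) = s₂ f := by
    rw [show s₁ f = sub2 (MvPolynomial.X 1) (-MvPolynomial.X 0 - MvPolynomial.X 1) f from rfl,
      swapS_sub2, rnX1, rnrho]
    rfl
  have tf2 : swapS (s₂ f) = s₁ f := by
    rw [show s₂ f = sub2 (MvPolynomial.X 0) (-MvPolynomial.X 0 - MvPolynomial.X 1) f from rfl,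
      swapS_sub2, rnX0, rnrho]
    rfl
  -- the key algebraic identity
  have key : (X 0 : MvPowerSeries (Fin 2) ℂ) * X 1 * (expMv (X 0) - 1) * (expMv (X 1) - 1)
        * (expMv (-(X 0 + X 1)) - 1) * (g * (1 - X 1 * C) + s₁ g * (1 + X 0 * C) + sub2 (-MvPolynomial.X 0 - MvPolynomial.X 1) (MvPolynomial.X 0) g + C)
      = -((expMv (X 0) - 1) * (expMv (X 1) - 1) * expMv (-X 0) * (X 0 * X 1 * (X 0 + X 1) * (f + expMv (-X 1) * s₁ f + expMv (X 0) * s₂ f) - (X 0 * (expMv (-X 1) - 1) + X 1 * (expMv (X 0) - 1)))) := by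
    linear_combination (X 0 * X 1 * (expMv (X 1) - 1) * (expMv (-(X 0 + X 1)) - 1) * (1 - X 1 * C)) * hg + (X 0 * X 1 * (expMv (X 0) - 1) * (expMv (-(X 0 + X 1)) - 1) * (1 + X 0 * C)) * hg1 + (X 0 * X 1 * (expMv (X 0) - 1) * (expMv (X 1) - 1)) * hg2 + (-((expMv (X 0) - 1) * (expMv (X 1) - 1) - X 0 * X 1 * (expMv (X 1) - 1) * f + X 0 * X 1 * (expMv (X 0) - 1) * s₁ f) * expMv (-(X 0 + X 1))) * hC + (((expMv (X 0) - 1) * (expMv (X 1) - 1) - X 0 * X 1 * (expMv (X 1) - 1) * f + X 0 * X 1 * (expMv (X 0) - 1) * s₁ f) * (X 0 * X 1 * C + X 1)) * u3 + (X 0 * X 1 * (X 0 + X 1) * (expMv (X 1) - 1) * f + X 0 * X 1 * (X 0 + X 1) * (expMv (X 0) - 1) * (expMv (X 1) - 1) * s₂ f - X 1 * (expMv (X 0) - 1) * (expMv (X 1) - 1)) * u1 + (X 0 * X 1 * (X 0 + X 1) * (expMv (X 1) - 1) * expMv (-X 0) * f - (X 0 + X 1) * (expMv (X 0) - 1) *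 (expMv (X 1) - 1) * expMv (-X 0)) * u2 + (-(X 0 * X 1 * (X 0 + X 1) * (expMv (X 1) - 1) * expMv (X 1) * f) + X 0 * X 1 * (X 0 + X 1) * (expMv (X 0) - 1) * (expMv (X 1) - 1) * s₁ f - (expMv (X 0) - 1) * (expMv (X 1) - 1) * (X 0 - (X 0 + X 1) * expMv (X 1))) * u4
  constructor
  · intro hW
    have hVp : (X 0 * X 1 * (X 0 + X 1) * (f + expMv (-X 1) * s₁ f + expMv (X 0) * s₂ f) - (X 0 * (expMv (-X 1) - 1) + X 1 * (expMv (X 0) - 1))) = 0 := by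
      have hz : ((expMv (X 0) - 1) * (expMv (X 1) - 1) * expMv (-X 0)) * (X 0 * X 1 * (X 0 + X 1) * (f + expMv (-X 1) * s₁ f + expMv (X 0) * s₂ f) - (X 0 * (expMv (-X 1) - 1) + X 1 * (expMv (X 0) - 1))) = 0 := by
        linear_combination key - ((X 0 : MvPowerSeries (Fin 2) ℂ) * X 1 * (expMv (X 0) - 1)
          * (expMv (X 1) - 1) * (expMv (-(X 0 + X 1)) - 1)) * hW
      rcases mul_eq_zero.mp hz with h | h
      · exact absurd h (mul_ne_zero (mul_ne_zero hA hB) hELm)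
      · exact h
    have hTau := congrArg swapS hVp
    simp only [szero, ssub, sadd, smul, sone, tl, tm, tEL, tEm, tELm, tEmm, tf1, tf2, hf] at hTau
    show (X 0 : MvPowerSeries (Fin 2) ℂ) * X 1 * (X 0 + X 1)
        * (f + expMv (X 1) * s₁ f + expMv (-X 0) * s₂ f)
      = X 0 * (expMv (X 1) - 1) + X 1 * (expMv (-X 0) - 1)
    linear_combination hTau
  · intro hE
    have hV : (X 0 * X 1 * (X 0 + X 1) * (f + expMv (X 1) * s₁ f + expMv (-X 0) * s₂ f) - (X 0 * (expMv (X 1) - 1) + X 1 * (expMv (-X 0) - 1))) = 0 := by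
      have hE' : (X 0 : MvPowerSeries (Fin 2) ℂ) * X 1 * (X 0 + X 1)
          * (f + expMv (X 1) * s₁ f + expMv (-X 0) * s₂ f)
        = X 0 * (expMv (X 1) - 1) + X 1 * (expMv (-X 0) - 1) := hE
      linear_combination hE'
    have hTau := congrArg swapS hV
    simp only [szero, ssub, sadd, smul, sone, tl, tm, tEL, tEm, tELm, tEmm, tf1, tf2, hf] at hTau
    have hz : ((X 0 : MvPowerSeries (Fin 2) ℂ) * X 1 * (expMv (X 0) - 1) * (expMv (X 1) - 1)
        * (expMv (-(X 0 + X 1)) - 1)) * (g * (1 - X 1 * C) + s₁ g * (1 + X 0 * C) + sub2 (-MvPolynomial.X 0 - MvPolynomial.X 1) (MvPolynomial.X 0) g + C) = 0 := by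
      linear_combination key - ((expMv (X 0) - 1) * (expMv (X 1) - 1) * expMv (-X 0)) * hTau
    rcases mul_eq_zero.mp hz with h | h
    · exact absurd h (mul_ne_zero (mul_ne_zero (mul_ne_zero (mul_ne_zero hlam hmu) hA) hB) hR)
    · exact h

end
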